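/- arXiv:0812.3528 — 3 statements merged into one kernel-verified Lean document; each statement's English description precedes it below -/
import Mathlib

section
/- Suppose there exists a positive random sequence (α_n) increasing to infinity and a symmetric positive definite d×d matrix L such that S_n/α_n → L a.s. Set φ_n = α_n^{-1} Φ_n^t L^{-1} Φ_n and let ρ_n be the spectral radius of the symmetric matrix R_n = α_n L^{1/2} S_n^{-1} L^{1/2} − I. Then |f_n − φ_n| ≤ ρ_n φ_n pointwise, ρ_n → 0 almost surely, and consequently f_n = φ_n + o(φ_n) almost surely. -/
open MeasureTheory Filter Finset Matrix Topology Asymptotics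

noncomputable section

/-- `S_n = S + ∑_{k=0}^n Φ_k Φ_kᵗ`. -/
def Smat {Ω : Type*} {d : ℕ} (S : Matrix (Fin d) (Fin d) ℝ)
    (Φ : ℕ → Ω → Fin d → ℝ) (n : ℕ) (ω : Ω) : Matrix (Fin d) (Fin d) ℝ :=
  S + ∑ k ∈ Finset.range (n + 1), vecMulVec (Φ k ω) (Φ k ω)

/-- The explosion coefficient `f_n = Φ_nᵗ S_n⁻¹ Φ_n`. -/
def expl {Ω : Type*} {d : ℕ} (S : Matrix (Fin d) (Fin d) ℝ)
    (Φ : ℕ → Ω → Fin d → ℝ) (n : ℕ) (ω : Ω) : ℝ :=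
  Φ n ω ⬝ᵥ ((Smat S Φ n ω)⁻¹ *ᵥ Φ n ω)

namespace ExplAux

set_option synthInstance.maxHeartbeats 1000000
set_option maxHeartbeats 1000000

variable {d : ℕ}

/-- A norm bound for the spectrum, via the operator norm on Euclidean space. -/
def nb (R : Matrix (Fin d) (Fin d) ℝ) : ℝ :=
  ‖toEuclideanCLM (𝕜 := ℝ) R‖ * ‖(1 : EuclideanSpace ℝ (Fin d) →L[ℝ] EuclideanSpace ℝ (Fin d))‖

lemma nb_nonneg (R : Matrix (Fin d) (Fin d) ℝ) : 0 ≤ nb R :=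
  mul_nonneg (norm_nonneg _) (norm_nonneg _)

lemma abs_le_nb {R : Matrix (Fin d) (Fin d) ℝ} {x : ℝ} (hx : x ∈ spectrum ℝ R) : |x| ≤ nb R := by
  have h : x ∈ spectrum ℝ (toEuclideanCLM (𝕜 := ℝ) R) := by
    rwa [AlgEquiv.spectrum_eq (toEuclideanCLM (𝕜 := ℝ) (n := Fin d))]
  simpa [nb, Real.norm_eq_abs] using spectrum.norm_le_norm_mul_of_mem h

/-- The spectral radius as a real supremum. -/
def rho (R : Matrix (Fin d) (Fin d) ℝ) : ℝ := ⨆ x ∈ spectrum ℝ R, |x|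

lemma rho_nonneg (R : Matrix (Fin d) (Fin d) ℝ) : 0 ≤ rho R :=
  Real.iSup_nonneg fun x => Real.iSup_nonneg fun _ => abs_nonneg x

lemma rho_le_nb (R : Matrix (Fin d) (Fin d) ℝ) : rho R ≤ nb R :=
  Real.iSup_le (fun _ => Real.iSup_le (fun hx => abs_le_nb hx) (nb_nonneg R)) (nb_nonneg R)

lemma abs_le_rho {R : Matrix (Fin d) (Fin d) ℝ} {x : ℝ} (hx : x ∈ spectrum ℝ R) :
    |x| ≤ rho R := by
  have hb : BddAbove (Set.range fun y : ℝ => ⨆ _ : y ∈ spectrum ℝ R, |y|) := by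
    refine ⟨nb R, ?_⟩
    rintro _ ⟨y, rfl⟩
    exact Real.iSup_le (fun hy => abs_le_nb hy) (nb_nonneg R)
  have h1 : |x| ≤ ⨆ _ : x ∈ spectrum ℝ R, |x| :=
    le_ciSup (f := fun _ : x ∈ spectrum ℝ R => |x|)
      ⟨|x|, by rintro _ ⟨_, rfl⟩; exact le_rfl⟩ hx
  exact h1.trans (le_ciSup hb x)

lemma dot_shift (M : Matrix (Fin d) (Fin d) ℝ) (v w : Fin d → ℝ) :
    v ⬝ᵥ (M *ᵥ w) = (Mᵀ *ᵥ v) ⬝ᵥ w := by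
  rw [dotProduct_mulVec, mulVec_transpose]

/-- The key quadratic-form bound: `|yᵗ R y| ≤ ρ(R) ‖y‖²` for a symmetric matrix. -/
lemma quad_bound (R : Matrix (Fin d) (Fin d) ℝ) (hR : R.IsHermitian) (y : Fin d → ℝ) :
    |y ⬝ᵥ R *ᵥ y| ≤ rho R * (y ⬝ᵥ y) := by
  set U : Matrix (Fin d) (Fin d) ℝ := (hR.eigenvectorUnitary : Matrix (Fin d) (Fin d) ℝ) with hU
  have hstar : (star U : Matrix (Fin d) (Fin d) ℝ) = Uᵀ := by
    rw [Matrix.star_eq_conjTranspose, conjTranspose_eq_transpose_of_trivial]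
  have hUU : U * Uᵀ = 1 := by
    rw [← hstar]; exact (Matrix.mem_unitaryGroup_iff).mp hR.eigenvectorUnitary.2
  set z : Fin d → ℝ := Uᵀ *ᵥ y with hz
  have hzz : z ⬝ᵥ z = y ⬝ᵥ y := by
    rw [hz, dot_shift Uᵀ, transpose_transpose, mulVec_mulVec, hUU, one_mulVec]
  have hmain : y ⬝ᵥ R *ᵥ y = ∑ i, hR.eigenvalues i * (z i) ^ 2 := by
    conv_lhs => rw [hR.spectral_theorem]
    rw [Unitary.conjStarAlgAut_apply, ← hU, hstar, ← mulVec_mulVec, ← mulVec_mulVec, dot_shift]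
    simp [dotProduct, mulVec_diagonal, Function.comp]
    ring_nf
    exact Finset.sum_congr rfl fun i _ => by ring
  rw [hmain, ← hzz]
  calc |∑ i, hR.eigenvalues i * z i ^ 2| ≤ ∑ i, |hR.eigenvalues i * z i ^ 2| :=
        Finset.abs_sum_le_sum_abs _ _
    _ ≤ ∑ i, rho R * z i ^ 2 := by
        refine Finset.sum_le_sum fun i _ => ?_
        rw [abs_mul, abs_of_nonneg (sq_nonneg (z i))]
        exact mul_le_mul_of_nonneg_right (abs_le_rho (hR.eigenvalues_mem_spectrum_real i))
          (sq_nonneg _)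
    _ = rho R * (z ⬝ᵥ z) := by rw [← Finset.mul_sum]; congr 1; simp [dotProduct, sq]

lemma tendsto_nb {f : ℕ → Matrix (Fin d) (Fin d) ℝ} (hf : Tendsto f atTop (𝓝 0)) :
    Tendsto (fun n => nb (f n)) atTop (𝓝 0) := by
  have hlin : Continuous fun M : Matrix (Fin d) (Fin d) ℝ => toEuclideanCLM (𝕜 := ℝ) M := by
    let ℓ : Matrix (Fin d) (Fin d) ℝ →ₗ[ℝ]
        (EuclideanSpace ℝ (Fin d) →L[ℝ] EuclideanSpace ℝ (Fin d)) :=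
      { toFun := fun M => toEuclideanCLM (𝕜 := ℝ) M
        map_add' := fun a b => map_add _ a b
        map_smul' := fun c M => map_smul (toEuclideanCLM (𝕜 := ℝ)) c M }
    exact ℓ.continuous_of_finiteDimensional
  have h0 : Tendsto (fun n => ‖toEuclideanCLM (𝕜 := ℝ) (f n)‖) atTop (𝓝 0) := by
    have := (hlin.tendsto 0).comp hf
    rw [map_zero] at this
    simpa using this.norm
  have := h0.mul_const ‖(1 : EuclideanSpace ℝ (Fin d) →L[ℝ] EuclideanSpace ℝ (Fin d))‖
  simpa [nb] using this

lemma vecMulVec_posSemidef (v : Fin d → ℝ) : (vecMulVec v v).PosSemidef := by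
  refine PosSemidef.of_dotProduct_mulVec_nonneg ?_ ?_
  · rw [IsHermitian, conjTranspose_eq_transpose_of_trivial]
    ext i j
    simp [vecMulVec, mul_comm]
  · intro x
    have h : vecMulVec v v *ᵥ x = (v ⬝ᵥ x) • v := by
      ext i
      simp only [vecMulVec, mulVec, dotProduct, Pi.smul_apply, smul_eq_mul, of_apply]
      rw [Finset.sum_mul]
      exact Finset.sum_congr rfl fun j _ => by ring
    rw [h]
    simp only [star_trivial, dotProduct_smul, smul_eq_mul]
    rw [dotProduct_comm]
    exact mul_self_nonneg _

lemma smat_posDef {Ω : Type*} {S : Matrix (Fin d) (Fin d) ℝ} (hS : S.PosDef)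
    (Φ : ℕ → Ω → Fin d → ℝ) (n : ℕ) (ω : Ω) : (Smat S Φ n ω).PosDef := by
  apply hS.add_posSemidef
  classical
  induction (Finset.range (n + 1)) using Finset.cons_induction with
  | empty => simpa using Matrix.PosSemidef.zero
  | cons a s ha ih =>
      rw [Finset.sum_cons]
      exact (vecMulVec_posSemidef _).add ih

end ExplAux

open ExplAux

/-- If `S_n/α_n → L` a.s., then with `φ_n = α_n⁻¹ Φ_nᵗ L⁻¹ Φ_n` and `ρ_n` the spectral
radius of the symmetric matrix `R_n = α_n L^{1/2} S_n⁻¹ L^{1/2} - I`, one has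
`|f_n - φ_n| ≤ ρ_n φ_n` pointwise, `ρ_n → 0` a.s., and hence `f_n = φ_n + o(φ_n)` a.s. -/
theorem explosion_coefficient_asymptotics
    {Ω : Type*} {m0 : MeasurableSpace Ω} {μ : Measure Ω} [IsProbabilityMeasure μ]
    {d : ℕ} (Φ : ℕ → Ω → Fin d → ℝ) (S L Lhalf : Matrix (Fin d) (Fin d) ℝ)
    (hS : S.PosDef) (hL : L.PosDef)
    (hLhalf : Lhalf.PosDef) (hLhalfsq : Lhalf * Lhalf = L)
    (α : ℕ → Ω → ℝ)
    (hΦmeas : ∀ n, Measurable (Φ n))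
    (hαmeas : ∀ n, Measurable (α n))
    (hαpos : ∀ n ω, 0 < α n ω)
    (hαmono : ∀ᵐ ω ∂μ, Monotone fun n => α n ω)
    (hαtop : ∀ᵐ ω ∂μ, Tendsto (fun n => α n ω) atTop atTop)
    (hconv : ∀ᵐ ω ∂μ, Tendsto (fun n => (α n ω)⁻¹ • Smat S Φ n ω) atTop (𝓝 L)) :
    let φ : ℕ → Ω → ℝ := fun n ω => (α n ω)⁻¹ * (Φ n ω ⬝ᵥ (L⁻¹ *ᵥ Φ n ω))
    let R : ℕ → Ω → Matrix (Fin d) (Fin d) ℝ :=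
      fun n ω => α n ω • (Lhalf * (Smat S Φ n ω)⁻¹ * Lhalf) - 1
    let ρ : ℕ → Ω → ℝ := fun n ω => ⨆ x ∈ spectrum ℝ (R n ω), |x|
    (∀ ω n, |expl S Φ n ω - φ n ω| ≤ ρ n ω * φ n ω) ∧
      (∀ᵐ ω ∂μ, Tendsto (fun n => ρ n ω) atTop (𝓝 0)) ∧
      (∀ᵐ ω ∂μ, (fun n => expl S Φ n ω - φ n ω) =o[atTop] fun n => φ n ω) := by
  intro φ R ρ
  have hLhalfdet : IsUnit Lhalf.det := hLhalf.det_pos.ne'.isUnit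
  have hLdet : IsUnit L.det := hL.det_pos.ne'.isUnit
  have hLhalfinv : Lhalf * Lhalf⁻¹ = 1 := Matrix.mul_nonsing_inv _ hLhalfdet
  have hLhalfinv' : Lhalf⁻¹ * Lhalf = 1 := Matrix.nonsing_inv_mul _ hLhalfdet
  have hLinv_split : L⁻¹ = Lhalf⁻¹ * Lhalf⁻¹ := by
    rw [← hLhalfsq, Matrix.mul_inv_rev]
  have hLhalfT : Lhalfᵀ = Lhalf := by
    rw [← conjTranspose_eq_transpose_of_trivial]; exact hLhalf.isHermitian
  have hLhalfinvT : (Lhalf⁻¹)ᵀ = Lhalf⁻¹ := by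
    rw [← conjTranspose_eq_transpose_of_trivial]; exact hLhalf.isHermitian.inv
  have hSn : ∀ n ω, (Smat S Φ n ω).PosDef := fun n ω => smat_posDef hS Φ n ω
  have hrho : ∀ n ω, ρ n ω = rho (R n ω) := fun n ω => rfl
  -- pointwise bound
  have h1 : ∀ ω n, |expl S Φ n ω - φ n ω| ≤ ρ n ω * φ n ω := by
    intro ω n
    set Sn := Smat S Φ n ω with hSndef
    set v := Φ n ω with hv
    set a := α n ω with ha
    have ha0 : a ≠ 0 := (hαpos n ω).ne'
    set y : Fin d → ℝ := Lhalf⁻¹ *ᵥ v with hy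
    have hy1 : Lhalf *ᵥ y = v := by
      rw [hy, mulVec_mulVec, hLhalfinv, one_mulVec]
    have hy2 : y ⬝ᵥ y = v ⬝ᵥ (L⁻¹ *ᵥ v) := by
      conv_lhs => rw [hy, dot_shift, hLhalfinvT, mulVec_mulVec, ← hLinv_split]
      rw [dotProduct_comm]
    have hSnHerm : (Sn⁻¹).IsHermitian := (hSn n ω).isHermitian.inv
    have hmidHerm : (Lhalf * Sn⁻¹ * Lhalf).IsHermitian := by
      rw [IsHermitian, conjTranspose_mul, conjTranspose_mul, hLhalf.isHermitian,
        hSnHerm, mul_assoc]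
    have hHerm : (R n ω).IsHermitian := by
      show (a • (Lhalf * Sn⁻¹ * Lhalf) - 1).IsHermitian
      refine IsHermitian.sub ?_ isHermitian_one
      rw [IsHermitian, conjTranspose_smul, star_trivial, hmidHerm]
    have hmid : y ⬝ᵥ (Lhalf * Sn⁻¹ * Lhalf) *ᵥ y = v ⬝ᵥ (Sn⁻¹ *ᵥ v) := by
      rw [← mulVec_mulVec, ← mulVec_mulVec, hy1, dot_shift, hLhalfT, hy1]
    have hRy : y ⬝ᵥ (R n ω) *ᵥ y = a * (v ⬝ᵥ (Sn⁻¹ *ᵥ v)) - v ⬝ᵥ (L⁻¹ *ᵥ v) := by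
      show y ⬝ᵥ (a • (Lhalf * Sn⁻¹ * Lhalf) - 1) *ᵥ y = _
      rw [sub_mulVec, smul_mulVec, one_mulVec, dotProduct_sub, dotProduct_smul,
        smul_eq_mul, hmid, hy2]
    have hdiff : expl S Φ n ω - φ n ω = a⁻¹ * (y ⬝ᵥ (R n ω) *ᵥ y) := by
      rw [hRy]
      show v ⬝ᵥ (Sn⁻¹ *ᵥ v) - a⁻¹ * (v ⬝ᵥ (L⁻¹ *ᵥ v)) = _
      rw [mul_sub, ← mul_assoc, inv_mul_cancel₀ ha0, one_mul]
    have hφ : φ n ω = a⁻¹ * (y ⬝ᵥ y) := by rw [hy2]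
    rw [hdiff, hφ, hrho, abs_mul, abs_of_pos (inv_pos.2 (hαpos n ω))]
    calc a⁻¹ * |y ⬝ᵥ (R n ω) *ᵥ y| ≤ a⁻¹ * (rho (R n ω) * (y ⬝ᵥ y)) :=
          mul_le_mul_of_nonneg_left (quad_bound _ hHerm y) (inv_nonneg.2 (hαpos n ω).le)
      _ = rho (R n ω) * (a⁻¹ * (y ⬝ᵥ y)) := by ring
  -- a.s. convergence of ρ to 0
  have h2 : ∀ᵐ ω ∂μ, Tendsto (fun n => ρ n ω) atTop (𝓝 0) := by
    filter_upwards [hconv] with ω hω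
    have hRlim : Tendsto (fun n => R n ω) atTop (𝓝 0) := by
      have hdet : L.det ≠ 0 := hL.det_pos.ne'
      have hinv : ContinuousAt (Inv.inv : Matrix (Fin d) (Fin d) ℝ → _) L := by
        apply continuousAt_matrix_inv
        exact NormedRing.inverse_continuousAt (Units.mk0 L.det hdet)
      have hcont : ContinuousAt
          (fun M : Matrix (Fin d) (Fin d) ℝ => Lhalf * M⁻¹ * Lhalf - 1) L :=
        ((continuousAt_const.mul hinv).mul continuousAt_const).sub continuousAt_const
      have hval : Lhalf * L⁻¹ * Lhalf - 1 = 0 := by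
        rw [hLinv_split, ← mul_assoc, hLhalfinv, one_mul, hLhalfinv', sub_self]
      have htend : Tendsto (fun n => Lhalf * ((α n ω)⁻¹ • Smat S Φ n ω)⁻¹ * Lhalf - 1)
          atTop (𝓝 (Lhalf * L⁻¹ * Lhalf - 1)) := hcont.tendsto.comp hω
      rw [hval] at htend
      refine htend.congr fun n => ?_
      have hsmulinv : ((α n ω)⁻¹ • Smat S Φ n ω)⁻¹ = α n ω • (Smat S Φ n ω)⁻¹ := by
        apply Matrix.inv_eq_right_inv
        rw [smul_mul_smul_comm, inv_mul_cancel₀ (hαpos n ω).ne',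
          Matrix.mul_nonsing_inv _ (hSn n ω).det_pos.ne'.isUnit, one_smul]
      rw [hsmulinv, mul_smul_comm, smul_mul_assoc]
    have h0 : Tendsto (fun n => nb (R n ω)) atTop (𝓝 0) := tendsto_nb hRlim
    exact squeeze_zero (fun n => rho_nonneg _) (fun n => rho_le_nb _) h0
  refine ⟨h1, h2, ?_⟩
  -- little-o
  filter_upwards [h2] with ω hρ
  rw [isLittleO_iff]
  intro ε hε
  filter_upwards [hρ.eventually (gt_mem_nhds hε)] with n hn
  have hφ0 : 0 ≤ φ n ω := by
    apply mul_nonneg (inv_nonneg.2 (hαpos n ω).le)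
    have := (hL.inv).posSemidef.dotProduct_mulVec_nonneg (Φ n ω)
    simpa using this
  have hρ0 : 0 ≤ ρ n ω := by rw [hrho]; exact rho_nonneg _
  calc ‖expl S Φ n ω - φ n ω‖ = |expl S Φ n ω - φ n ω| := Real.norm_eq_abs _
    _ ≤ ρ n ω * φ n ω := h1 ω n
    _ ≤ ε * φ n ω := mul_le_mul_of_nonneg_right hn.le hφ0
    _ = ε * ‖φ n ω‖ := by rw [Real.norm_eq_abs, abs_of_nonneg hφ0]
end
end

section
/- Suppose there exists a positive random sequence (α_n) increasing to infinity and a symmetric positive definite d×d matrix L such that S_n/α_n → L a.s. Let (M_n) be any sequence of R^d-valued random vectors, and set V_n = M_n^t S_{n-1}^{-1} M_n and v_n = α_{n-1}^{-1} M_n^t L^{-1} M_n. Then V_n = v_n + o(v_n) almost surely; more precisely, |V_n − v_n| ≤ ρ_{n-1} v_n pointwise, where ρ_{n-1} is the spectral radius of the symmetric matrix α_{n-1} L^{1/2} S_{n-1}^{-1} L^{1/2} − I, and ρ_{n-1} → 0 almost surely. -/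
open MeasureTheory Filter Finset Matrix Topology Asymptotics

noncomputable section

namespace QFAux

variable {d : ℕ}

lemma psd_vecMulVec (v : Fin d → ℝ) : (vecMulVec v v).PosSemidef := by
  rw [vecMulVec_eq (Fin 1)]
  have h : (replicateCol (Fin 1) v) = (replicateRow (Fin 1) v)ᴴ := by
    ext i j; simp [Matrix.replicateCol, Matrix.replicateRow, Matrix.conjTranspose_apply]
  rw [h]
  exact Matrix.posSemidef_conjTranspose_mul_self _

lemma psd_add {A B : Matrix (Fin d) (Fin d) ℝ} (hA : A.PosSemidef) (hB : B.PosSemidef) :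
    (A + B).PosSemidef :=
  hA.add hB

lemma smat_posDef {Ω : Type*} (S : Matrix (Fin d) (Fin d) ℝ) (Φ : ℕ → Ω → Fin d → ℝ)
    (hS : S.PosDef) (n : ℕ) (ω : Ω) : (Smat S Φ n ω).PosDef := by
  refine hS.add_posSemidef ?_
  refine Finset.sum_induction _ Matrix.PosSemidef (fun a b ha hb => psd_add ha hb) ?_ ?_
  · simpa using Matrix.PosSemidef.zero (n := Fin d) (R := ℝ)
  · intro k _; exact psd_vecMulVec _

/-- The matrix as a continuous linear map on `Fin d → ℝ`. -/
def matCLM : Matrix (Fin d) (Fin d) ℝ →ₗ[ℝ] ((Fin d → ℝ) →L[ℝ] (Fin d → ℝ)) :=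
  (LinearMap.toContinuousLinearMap (𝕜 := ℝ)).toLinearMap.comp
    (Matrix.toLin' (R := ℝ)).toLinearMap

lemma matCLM_apply (A : Matrix (Fin d) (Fin d) ℝ) (x : Fin d → ℝ) :
    matCLM A x = A *ᵥ x := by
  simp [matCLM, Matrix.toLin'_apply]

/-- An operator-norm bound for spectra. -/
def opn (A : Matrix (Fin d) (Fin d) ℝ) : ℝ := ‖matCLM A‖

lemma opn_nonneg (A : Matrix (Fin d) (Fin d) ℝ) : 0 ≤ opn A := norm_nonneg _

lemma opn_continuous : Continuous (opn (d := d)) :=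
  continuous_norm.comp (matCLM (d := d)).continuous_of_finiteDimensional

lemma opn_zero : opn (0 : Matrix (Fin d) (Fin d) ℝ) = 0 := by
  simp [opn, map_zero]

lemma spec_abs_le {A : Matrix (Fin d) (Fin d) ℝ} {lam : ℝ}
    (h : lam ∈ spectrum ℝ A) : |lam| ≤ opn A := by
  rw [spectrum.mem_iff] at h
  have hdet : (algebraMap ℝ (Matrix (Fin d) (Fin d) ℝ) lam - A).det = 0 := by
    by_contra hd
    exact h ((Matrix.isUnit_iff_isUnit_det _).2 (isUnit_iff_ne_zero.2 hd))
  obtain ⟨v, hv0, hv⟩ := (Matrix.exists_mulVec_eq_zero_iff).2 hdet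
  have hAv : A *ᵥ v = lam • v := by
    rw [Matrix.sub_mulVec] at hv
    have h2 : algebraMap ℝ (Matrix (Fin d) (Fin d) ℝ) lam *ᵥ v = lam • v := by
      rw [Algebra.algebraMap_eq_smul_one, Matrix.smul_mulVec, Matrix.one_mulVec]
    rw [h2] at hv
    linear_combination (norm := module) -hv
  have hvpos : (0 : ℝ) < ‖v‖ := norm_pos_iff.2 hv0
  have hnorm : |lam| * ‖v‖ ≤ opn A * ‖v‖ := by
    calc |lam| * ‖v‖ = ‖lam • v‖ := by rw [norm_smul, Real.norm_eq_abs]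
      _ = ‖matCLM A v‖ := by rw [matCLM_apply, hAv]
      _ ≤ ‖matCLM A‖ * ‖v‖ := (matCLM A).le_opNorm v
  exact le_of_mul_le_mul_right hnorm hvpos

lemma rho_nonneg (A : Matrix (Fin d) (Fin d) ℝ) : 0 ≤ ⨆ x ∈ spectrum ℝ A, |x| :=
  Real.iSup_nonneg fun x => Real.iSup_nonneg fun _ => abs_nonneg x

lemma rho_le_opn (A : Matrix (Fin d) (Fin d) ℝ) : (⨆ x ∈ spectrum ℝ A, |x|) ≤ opn A :=
  Real.iSup_le (fun x => Real.iSup_le (fun hx => spec_abs_le hx) (opn_nonneg A)) (opn_nonneg A)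

lemma abs_le_rho {A : Matrix (Fin d) (Fin d) ℝ} {lam : ℝ}
    (h : lam ∈ spectrum ℝ A) : |lam| ≤ ⨆ x ∈ spectrum ℝ A, |x| := by
  have hb : BddAbove (Set.range fun x => ⨆ _ : x ∈ spectrum ℝ A, |x|) := by
    refine ⟨opn A, ?_⟩
    rintro y ⟨x, rfl⟩
    exact Real.iSup_le (fun hx => spec_abs_le hx) (opn_nonneg A)
  have h1 : (⨆ _ : lam ∈ spectrum ℝ A, |lam|) = |lam| :=
    ciSup_pos (f := fun _ => |lam|) h
  calc |lam| = ⨆ _ : lam ∈ spectrum ℝ A, |lam| := h1.symm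
    _ ≤ ⨆ x ∈ spectrum ℝ A, |x| := le_ciSup hb lam

lemma dot_transpose_mulVec (A : Matrix (Fin d) (Fin d) ℝ) (x z : Fin d → ℝ) :
    (Aᵀ *ᵥ x) ⬝ᵥ z = x ⬝ᵥ (A *ᵥ z) := by
  rw [Matrix.dotProduct_mulVec, Matrix.mulVec_transpose]

/-- Quadratic form bound via the spectral radius, for Hermitian real matrices. -/
lemma quad_abs_le {A : Matrix (Fin d) (Fin d) ℝ} (hA : A.IsHermitian) (x : Fin d → ℝ) :
    |x ⬝ᵥ A *ᵥ x| ≤ (⨆ μ ∈ spectrum ℝ A, |μ|) * (x ⬝ᵥ x) := by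
  classical
  set U : Matrix (Fin d) (Fin d) ℝ := (hA.eigenvectorUnitary : Matrix (Fin d) (Fin d) ℝ) with hU
  have hstar : star U = Uᵀ := by
    rw [Matrix.star_eq_conjTranspose, Matrix.conjTranspose]
    ext i j; simp
  have hU1 : U * star U = 1 := Matrix.mem_unitaryGroup_iff.mp hA.eigenvectorUnitary.2
  set y : Fin d → ℝ := star U *ᵥ x with hy
  have hUy : U *ᵥ y = x := by
    rw [hy, Matrix.mulVec_mulVec, hU1, Matrix.one_mulVec]
  have hy2 : y ⬝ᵥ y = x ⬝ᵥ x := by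
    calc y ⬝ᵥ y = (Uᵀ *ᵥ x) ⬝ᵥ y := by rw [← hstar]
      _ = x ⬝ᵥ (U *ᵥ y) := dot_transpose_mulVec U x y
      _ = x ⬝ᵥ x := by rw [hUy]
  have hD : ∀ z : Fin d → ℝ,
      z ⬝ᵥ (Matrix.diagonal (RCLike.ofReal ∘ hA.eigenvalues) *ᵥ z)
        = ∑ i, hA.eigenvalues i * (z i)^2 := by
    intro z
    simp only [dotProduct, Matrix.mulVec_diagonal]
    refine Finset.sum_congr rfl fun i _ => ?_
    simp [Function.comp]
    ring
  have key : x ⬝ᵥ A *ᵥ x = ∑ i, hA.eigenvalues i * (y i)^2 := by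
    conv_lhs => rw [hA.spectral_theorem, Unitary.conjStarAlgAut_apply]
    rw [← hU]
    rw [← Matrix.mulVec_mulVec, ← Matrix.mulVec_mulVec, ← hy]
    calc x ⬝ᵥ (U *ᵥ (Matrix.diagonal (RCLike.ofReal ∘ hA.eigenvalues) *ᵥ y))
        = (Uᵀ *ᵥ x) ⬝ᵥ (Matrix.diagonal (RCLike.ofReal ∘ hA.eigenvalues) *ᵥ y) :=
          (dot_transpose_mulVec U x _).symm
      _ = y ⬝ᵥ (Matrix.diagonal (RCLike.ofReal ∘ hA.eigenvalues) *ᵥ y) := by rw [← hstar]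
      _ = ∑ i, hA.eigenvalues i * (y i)^2 := hD y
  rw [key]
  set ρ := ⨆ μ ∈ spectrum ℝ A, |μ| with hρ
  calc |∑ i, hA.eigenvalues i * (y i)^2| ≤ ∑ i, |hA.eigenvalues i * (y i)^2| :=
        Finset.abs_sum_le_sum_abs _ _
    _ ≤ ∑ i, ρ * (y i)^2 := by
        refine Finset.sum_le_sum fun i _ => ?_
        rw [abs_mul, abs_of_nonneg (sq_nonneg (y i))]
        exact mul_le_mul_of_nonneg_right
          (abs_le_rho (hA.eigenvalues_mem_spectrum_real i)) (sq_nonneg _)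
    _ = ρ * (y ⬝ᵥ y) := by
        rw [dotProduct, Finset.mul_sum]
        exact Finset.sum_congr rfl fun i _ => by ring
    _ = ρ * (x ⬝ᵥ x) := by rw [hy2]

end QFAux

open QFAux

/-- If `S_n/α_n → L` a.s., then for any sequence `(M_n)` of random vectors, with
`V_n = M_nᵗ S_{n-1}⁻¹ M_n`, `v_n = α_{n-1}⁻¹ M_nᵗ L⁻¹ M_n` and `ρ_{n-1}` the spectral
radius of the symmetric matrix `α_{n-1} L^{1/2} S_{n-1}⁻¹ L^{1/2} - I`, one has
`|V_n - v_n| ≤ ρ_{n-1} v_n` pointwise, `ρ_{n-1} → 0` a.s., and `V_n = v_n + o(v_n)` a.s. -/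
theorem quadratic_form_asymptotics
    {Ω : Type*} {m0 : MeasurableSpace Ω} {μ : Measure Ω} [IsProbabilityMeasure μ]
    {d : ℕ} (Φ : ℕ → Ω → Fin d → ℝ) (M : ℕ → Ω → Fin d → ℝ)
    (S L Lhalf : Matrix (Fin d) (Fin d) ℝ)
    (hS : S.PosDef) (hL : L.PosDef)
    (hLhalf : Lhalf.PosDef) (hLhalfsq : Lhalf * Lhalf = L)
    (α : ℕ → Ω → ℝ)
    (hΦmeas : ∀ n, Measurable (Φ n))
    (hMmeas : ∀ n, Measurable (M n))
    (hαmeas : ∀ n, Measurable (α n))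
    (hαpos : ∀ n ω, 0 < α n ω)
    (hαmono : ∀ᵐ ω ∂μ, Monotone fun n => α n ω)
    (hαtop : ∀ᵐ ω ∂μ, Tendsto (fun n => α n ω) atTop atTop)
    (hconv : ∀ᵐ ω ∂μ, Tendsto (fun n => (α n ω)⁻¹ • Smat S Φ n ω) atTop (𝓝 L)) :
    let V : ℕ → Ω → ℝ := fun n ω => M n ω ⬝ᵥ ((Smat S Φ (n - 1) ω)⁻¹ *ᵥ M n ω)
    let v : ℕ → Ω → ℝ := fun n ω => (α (n - 1) ω)⁻¹ * (M n ω ⬝ᵥ (L⁻¹ *ᵥ M n ω))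
    let R : ℕ → Ω → Matrix (Fin d) (Fin d) ℝ :=
      fun n ω => α n ω • (Lhalf * (Smat S Φ n ω)⁻¹ * Lhalf) - 1
    let ρ : ℕ → Ω → ℝ := fun n ω => ⨆ x ∈ spectrum ℝ (R n ω), |x|
    (∀ ω n, |V n ω - v n ω| ≤ ρ (n - 1) ω * v n ω) ∧
      (∀ᵐ ω ∂μ, Tendsto (fun n => ρ (n - 1) ω) atTop (𝓝 0)) ∧
      (∀ᵐ ω ∂μ, (fun n => V n ω - v n ω) =o[atTop] fun n => v n ω) := by
  classical
  intro V v R ρ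
  -- basic facts about `Lhalf`
  have hLhdet : IsUnit Lhalf.det := hLhalf.det_pos.ne'.isUnit
  have hLhT : Lhalfᵀ = Lhalf := by
    have := hLhalf.isHermitian
    rwa [Matrix.IsHermitian, Matrix.conjTranspose_eq_transpose_of_trivial] at this
  have hLinv : L⁻¹ = Lhalf⁻¹ * Lhalf⁻¹ := by
    rw [← hLhalfsq, Matrix.mul_inv_rev]
  have hLhinvT : (Lhalf⁻¹)ᵀ = Lhalf⁻¹ := by
    rw [Matrix.transpose_nonsing_inv, hLhT]
  -- v is nonnegative
  have hvnn : ∀ n ω, 0 ≤ v n ω := by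
    intro n ω
    refine mul_nonneg (inv_nonneg.2 (hαpos _ ω).le) ?_
    have := hL.inv.posSemidef.dotProduct_mulVec_nonneg (M n ω)
    rwa [star_trivial] at this
  -- the pointwise inequality
  have part1 : ∀ ω n, |V n ω - v n ω| ≤ ρ (n - 1) ω * v n ω := by
    intro ω n
    set A := Smat S Φ (n - 1) ω with hA
    set a := α (n - 1) ω with ha
    set m := M n ω with hm
    have hApd : A.PosDef := smat_posDef S Φ hS (n - 1) ω
    have hAdet : IsUnit A.det := hApd.det_pos.ne'.isUnit
    have hapos : (0 : ℝ) < a := hαpos _ ω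
    set x : Fin d → ℝ := Lhalf⁻¹ *ᵥ m with hx
    have hLx : Lhalf *ᵥ x = m := by
      rw [hx, Matrix.mulVec_mulVec, Matrix.mul_nonsing_inv _ hLhdet, Matrix.one_mulVec]
    have hxx : x ⬝ᵥ x = m ⬝ᵥ (L⁻¹ *ᵥ m) := by
      calc x ⬝ᵥ x = ((Lhalf⁻¹)ᵀ *ᵥ m) ⬝ᵥ x := by rw [hLhinvT, ← hx]
        _ = m ⬝ᵥ (Lhalf⁻¹ *ᵥ x) := dot_transpose_mulVec _ _ _
        _ = m ⬝ᵥ (L⁻¹ *ᵥ m) := by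
            rw [hx, Matrix.mulVec_mulVec, ← hLinv]
    -- the Hermitian remainder matrix
    have hAinvH : (A⁻¹).IsHermitian := hApd.inv.isHermitian
    have hmidH : (Lhalf * A⁻¹ * Lhalf).IsHermitian := by
      have h := Matrix.isHermitian_mul_mul_conjTranspose Lhalf hAinvH
      rwa [hLhalf.isHermitian.eq] at h
    have hRH : (R (n - 1) ω).IsHermitian := by
      show (a • (Lhalf * A⁻¹ * Lhalf) - 1).IsHermitian
      refine Matrix.IsHermitian.sub ?_ Matrix.isHermitian_one
      rw [Matrix.IsHermitian, Matrix.conjTranspose_smul, star_trivial, hmidH.eq]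
    have hquad : x ⬝ᵥ (R (n - 1) ω) *ᵥ x
        = a * (m ⬝ᵥ (A⁻¹ *ᵥ m)) - m ⬝ᵥ (L⁻¹ *ᵥ m) := by
      show x ⬝ᵥ ((a • (Lhalf * A⁻¹ * Lhalf) - 1) *ᵥ x) = _
      rw [Matrix.sub_mulVec, Matrix.smul_mulVec, Matrix.one_mulVec,
        dotProduct_sub, dotProduct_smul]
      have hmid : x ⬝ᵥ ((Lhalf * A⁻¹ * Lhalf) *ᵥ x) = m ⬝ᵥ (A⁻¹ *ᵥ m) := by
        have h1 : (Lhalf * A⁻¹ * Lhalf) *ᵥ x = Lhalf *ᵥ (A⁻¹ *ᵥ m) := by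
          rw [← hLx]
          simp only [Matrix.mulVec_mulVec, Matrix.mul_assoc]
        calc x ⬝ᵥ ((Lhalf * A⁻¹ * Lhalf) *ᵥ x)
            = x ⬝ᵥ (Lhalf *ᵥ (A⁻¹ *ᵥ m)) := by rw [h1]
          _ = (Lhalfᵀ *ᵥ x) ⬝ᵥ (A⁻¹ *ᵥ m) := (dot_transpose_mulVec _ _ _).symm
          _ = m ⬝ᵥ (A⁻¹ *ᵥ m) := by rw [hLhT, hLx]
      rw [hmid, hxx, smul_eq_mul]
    have hVv : V n ω - v n ω = a⁻¹ * (x ⬝ᵥ (R (n - 1) ω) *ᵥ x) := by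
      rw [hquad]
      show m ⬝ᵥ (A⁻¹ *ᵥ m) - a⁻¹ * (m ⬝ᵥ (L⁻¹ *ᵥ m)) = _
      field_simp
    have hbound := quad_abs_le hRH x
    rw [hVv, abs_mul, abs_of_nonneg (inv_nonneg.2 hapos.le)]
    have : a⁻¹ * |x ⬝ᵥ (R (n - 1) ω) *ᵥ x|
        ≤ a⁻¹ * ((⨆ μ' ∈ spectrum ℝ (R (n - 1) ω), |μ'|) * (x ⬝ᵥ x)) :=
      mul_le_mul_of_nonneg_left hbound (inv_nonneg.2 hapos.le)
    refine this.trans (le_of_eq ?_)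
    show a⁻¹ * (ρ (n - 1) ω * (x ⬝ᵥ x)) = ρ (n - 1) ω * v n ω
    rw [hxx]
    show a⁻¹ * (ρ (n - 1) ω * (m ⬝ᵥ (L⁻¹ *ᵥ m))) = ρ (n - 1) ω * (a⁻¹ * (m ⬝ᵥ (L⁻¹ *ᵥ m)))
    ring
  -- a.e. convergence of ρ to 0
  have part2 : ∀ᵐ ω ∂μ, Tendsto (fun n => ρ (n - 1) ω) atTop (𝓝 0) := by
    filter_upwards [hconv] with ω hc
    have hRid : ∀ n, R n ω = Lhalf * ((α n ω)⁻¹ • Smat S Φ n ω)⁻¹ * Lhalf - 1 := by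
      intro n
      have hApd : (Smat S Φ n ω).PosDef := smat_posDef S Φ hS n ω
      have hAdet : IsUnit (Smat S Φ n ω).det := hApd.det_pos.ne'.isUnit
      haveI : Invertible ((α n ω)⁻¹ : ℝ) := invertibleOfNonzero (inv_ne_zero (hαpos n ω).ne')
      have hinv : ((α n ω)⁻¹ • Smat S Φ n ω)⁻¹ = α n ω • (Smat S Φ n ω)⁻¹ := by
        rw [Matrix.inv_smul (Smat S Φ n ω) ((α n ω)⁻¹ : ℝ) hAdet]
        congr 1
        rw [invOf_eq_right_inv (inv_mul_cancel₀ (hαpos n ω).ne')]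
      show α n ω • (Lhalf * (Smat S Φ n ω)⁻¹ * Lhalf) - 1 = _
      rw [hinv, Matrix.mul_smul, Matrix.smul_mul]
    have hinvL : Tendsto (fun n => ((α n ω)⁻¹ • Smat S Φ n ω)⁻¹) atTop (𝓝 L⁻¹) := by
      have hcont : ContinuousAt Inv.inv L := by
        refine continuousAt_matrix_inv L ?_
        rw [Ring.inverse_eq_inv']
        exact continuousAt_inv₀ hL.det_pos.ne'
      exact hcont.tendsto.comp hc
    have hlim : Lhalf * L⁻¹ * Lhalf - 1 = 0 := by
      rw [hLinv]
      rw [show Lhalf * (Lhalf⁻¹ * Lhalf⁻¹) * Lhalf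
          = (Lhalf * Lhalf⁻¹) * (Lhalf⁻¹ * Lhalf) by simp only [Matrix.mul_assoc]]
      rw [Matrix.mul_nonsing_inv _ hLhdet, Matrix.nonsing_inv_mul _ hLhdet, one_mul, sub_self]
    have hRto : Tendsto (fun n => R n ω) atTop (𝓝 0) := by
      have hf : Continuous fun B : Matrix (Fin d) (Fin d) ℝ => Lhalf * B * Lhalf - 1 :=
        ((continuous_const.matrix_mul continuous_id).matrix_mul continuous_const).sub
          continuous_const
      have := (hf.tendsto L⁻¹).comp hinvL
      rw [hlim] at this
      refine this.congr fun n => (hRid n).symm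
    have hρto : Tendsto (fun n => ρ n ω) atTop (𝓝 0) := by
      refine squeeze_zero (fun n => rho_nonneg _) (fun n => rho_le_opn _) ?_
      have := (opn_continuous.tendsto 0).comp hRto
      rwa [opn_zero] at this
    exact hρto.comp (tendsto_sub_atTop_nat 1)
  refine ⟨part1, part2, ?_⟩
  -- little-o
  filter_upwards [part2] with ω hρ0
  rw [Asymptotics.isLittleO_iff]
  intro ε hε
  filter_upwards [hρ0.eventually_lt_const hε] with n hn
  rw [Real.norm_eq_abs, Real.norm_eq_abs, abs_of_nonneg (hvnn n ω)]
  calc |V n ω - v n ω| ≤ ρ (n - 1) ω * v n ω := part1 ω n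
    _ ≤ ε * v n ω := mul_le_mul_of_nonneg_right hn.le (hvnn n ω)

end
end

section
/- Let A be a symmetric positive definite d×d real matrix, φ, M ∈ R^d, and set B = A + φφ^t and f = φ^t B^{-1} φ. Then M^t A^{-1} M − M^t B^{-1} M ≤ f · (M^t A^{-1} M). In particular, a_n(1) ≤ f_n V_n, where a_n(1) = M_n^t S_{n-1}^{-1} M_n − M_n^t S_n^{-1} M_n, V_n = M_n^t S_{n-1}^{-1} M_n, and f_n = Φ_n^t S_n^{-1} Φ_n. -/
open Finset Matrix

noncomputable section

/-- `S_n = S + ∑_{k=0}^n Φ_k Φ_kᵗ` (deterministic version). -/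
def SmatD {d : ℕ} (S : Matrix (Fin d) (Fin d) ℝ)
    (Φ : ℕ → Fin d → ℝ) (n : ℕ) : Matrix (Fin d) (Fin d) ℝ :=
  S + ∑ k ∈ Finset.range (n + 1), vecMulVec (Φ k) (Φ k)

lemma vecMulVec_mulVec' {d : ℕ} (a b x : Fin d → ℝ) :
    vecMulVec a b *ᵥ x = (b ⬝ᵥ x) • a := by
  ext i
  simp [mulVec, dotProduct, vecMulVec_apply, Finset.mul_sum, mul_comm, mul_left_comm]

lemma vecMulVec_posSemidef {d : ℕ} (a : Fin d → ℝ) :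
    (vecMulVec a a).PosSemidef := by
  refine .of_dotProduct_mulVec_nonneg ?_ ?_
  · ext i j
    simp [Matrix.IsHermitian, conjTranspose_apply, vecMulVec_apply, mul_comm]
  · intro x
    rw [vecMulVec_mulVec']
    have : star x ⬝ᵥ (a ⬝ᵥ x) • a = (a ⬝ᵥ x) * (a ⬝ᵥ x) := by
      simp [dotProduct_smul, dotProduct_comm a x, mul_comm]
    rw [this]
    exact mul_self_nonneg _

lemma symm_dot {d : ℕ} {P : Matrix (Fin d) (Fin d) ℝ} (hP : P.IsHermitian)
    (v w : Fin d → ℝ) : v ⬝ᵥ P *ᵥ w = w ⬝ᵥ P *ᵥ v := by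
  have hPt : Pᵀ = P := by
    have := hP.symm
    rw [← conjTranspose_eq_transpose_of_trivial]; exact hP
  rw [Matrix.dotProduct_mulVec, ← hPt, vecMul_transpose, hPt, dotProduct_comm]

lemma posdef_quad_nonneg {d : ℕ} {P : Matrix (Fin d) (Fin d) ℝ} (hP : P.PosSemidef)
    (x : Fin d → ℝ) : 0 ≤ x ⬝ᵥ P *ᵥ x := by
  have := hP.dotProduct_mulVec_nonneg x
  simpa using this

/-- Main one-step lemma. -/
lemma key_step {d : ℕ} (A : Matrix (Fin d) (Fin d) ℝ) (hA : A.PosDef) (φ M : Fin d → ℝ) :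
    M ⬝ᵥ (A⁻¹ *ᵥ M) - M ⬝ᵥ ((A + vecMulVec φ φ)⁻¹ *ᵥ M) ≤
      (φ ⬝ᵥ ((A + vecMulVec φ φ)⁻¹ *ᵥ φ)) * (M ⬝ᵥ (A⁻¹ *ᵥ M)) := by
  classical
  set B := A + vecMulVec φ φ with hB
  have hBpd : B.PosDef := hA.add_posSemidef (vecMulVec_posSemidef φ)
  have hAinv : A⁻¹.PosDef := hA.inv
  have hAunit : (IsUnit A.det) := hA.det_pos.ne'.isUnit
  have hBunit : (IsUnit B.det) := hBpd.det_pos.ne'.isUnit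
  set u : Fin d → ℝ := A⁻¹ *ᵥ φ with hu
  set c : ℝ := φ ⬝ᵥ u with hc
  have hc0 : 0 ≤ c := posdef_quad_nonneg hAinv.posSemidef φ
  have h1c : (0:ℝ) < 1 + c := by linarith
  set κ : ℝ := (1 + c)⁻¹ with hκ
  have hκ0 : 0 < κ := inv_pos.mpr h1c
  have hκ1 : κ * (1 + c) = 1 := inv_mul_cancel₀ h1c.ne'
  have hAu : A *ᵥ u = φ := by
    rw [hu, mulVec_mulVec, Matrix.mul_nonsing_inv _ hAunit, one_mulVec]
  -- Sherman–Morrison at vector level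
  have hBinv : ∀ v : Fin d → ℝ, B⁻¹ *ᵥ v = A⁻¹ *ᵥ v - (κ * (u ⬝ᵥ v)) • u := by
    intro v
    have hsym : φ ⬝ᵥ (A⁻¹ *ᵥ v) = u ⬝ᵥ v := by
      rw [symm_dot hAinv.isHermitian]
      exact dotProduct_comm _ _
    set t : ℝ := u ⬝ᵥ v with htv
    set w : Fin d → ℝ := A⁻¹ *ᵥ v - (κ * t) • u with hw
    have hw1 : A *ᵥ w = v - (κ * t) • φ := by
      rw [hw, Matrix.mulVec_sub, mulVec_mulVec, Matrix.mul_nonsing_inv _ hAunit,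
        one_mulVec, Matrix.mulVec_smul, hAu]
    have hw2 : φ ⬝ᵥ w = t - κ * t * c := by
      rw [hw, dotProduct_sub, dotProduct_smul, hsym]
      simp only [smul_eq_mul, hc]
    have key : B *ᵥ w = v := by
      rw [hB, Matrix.add_mulVec, hw1, vecMulVec_mulVec', hw2]
      funext i
      simp only [Pi.add_apply, Pi.sub_apply, Pi.smul_apply, smul_eq_mul]
      have h0 : t - κ * t * c - κ * t = 0 := by linear_combination (-t) * hκ1
      linear_combination (φ i) * h0
    calc B⁻¹ *ᵥ v = B⁻¹ *ᵥ (B *ᵥ w) := by rw [key]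
      _ = w := by
          rw [mulVec_mulVec, Matrix.nonsing_inv_mul _ hBunit, one_mulVec]
  set V : ℝ := M ⬝ᵥ (A⁻¹ *ᵥ M) with hV
  set t : ℝ := u ⬝ᵥ M with ht
  have hMu : M ⬝ᵥ u = t := dotProduct_comm M u
  have hquadM : M ⬝ᵥ (B⁻¹ *ᵥ M) = V - κ * t * t := by
    rw [hBinv M, dotProduct_sub, dotProduct_smul, hMu]
    simp only [smul_eq_mul, ← hV, ← ht]
  have hquadφ : φ ⬝ᵥ (B⁻¹ *ᵥ φ) = κ * c := by
    rw [hBinv φ, dotProduct_sub, dotProduct_smul, ← hc]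
    have huφ : u ⬝ᵥ φ = c := dotProduct_comm u φ
    rw [huφ]
    simp only [smul_eq_mul]
    nlinarith [hκ1]
  -- Cauchy–Schwarz : t² ≤ c * V
  have hCS : t * t ≤ c * V := by
    have hquad : ∀ x : ℝ, 0 ≤ c * (x * x) + (2 * t) * x + V := by
      intro x
      have h0 := posdef_quad_nonneg hAinv.posSemidef (x • φ + M)
      have h1 : φ ⬝ᵥ (A⁻¹ *ᵥ M) = t := by
        rw [ht, symm_dot hAinv.isHermitian]
        exact dotProduct_comm _ _
      have h2 : M ⬝ᵥ (A⁻¹ *ᵥ φ) = t := hMu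
      have hexp : (x • φ + M) ⬝ᵥ (A⁻¹ *ᵥ (x • φ + M))
          = x * x * (φ ⬝ᵥ (A⁻¹ *ᵥ φ)) + x * (φ ⬝ᵥ (A⁻¹ *ᵥ M)) + x * (M ⬝ᵥ (A⁻¹ *ᵥ φ))
            + M ⬝ᵥ (A⁻¹ *ᵥ M) := by
        simp only [Matrix.mulVec_add, Matrix.mulVec_smul, add_dotProduct, dotProduct_add,
          smul_dotProduct, dotProduct_smul, smul_eq_mul]
        ring
      rw [hexp, h1, h2, ← hu, ← hc, ← hV] at h0
      nlinarith [h0]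
    have hd := discrim_le_zero hquad
    rw [discrim] at hd
    nlinarith
  rw [hquadM, hquadφ]
  nlinarith [mul_nonneg hκ0.le (sub_nonneg.mpr hCS)]

lemma SmatD_posDef {d : ℕ} (S : Matrix (Fin d) (Fin d) ℝ) (hS : S.PosDef)
    (Φ : ℕ → Fin d → ℝ) (n : ℕ) : (SmatD S Φ n).PosDef := by
  have hsum : (∑ k ∈ Finset.range (n + 1), vecMulVec (Φ k) (Φ k)).PosSemidef := by
    induction (n + 1) with
    | zero => simpa using Matrix.PosSemidef.zero
    | succ m ih =>
        rw [Finset.sum_range_succ]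
        exact ih.add (vecMulVec_posSemidef (Φ m))
  exact hS.add_posSemidef hsum

/-- For `A` symmetric positive definite, `B = A + φφᵗ` and `f = φᵗ B⁻¹ φ`, one has
`Mᵗ A⁻¹ M - Mᵗ B⁻¹ M ≤ f (Mᵗ A⁻¹ M)`; in particular `a_n(1) ≤ f_n V_n` where
`a_n(1) = M_nᵗ S_{n-1}⁻¹ M_n - M_nᵗ S_n⁻¹ M_n` and `V_n = M_nᵗ S_{n-1}⁻¹ M_n`. -/
theorem quadratic_decrement_bound
    {d : ℕ} (A : Matrix (Fin d) (Fin d) ℝ) (hA : A.PosDef) (φ M : Fin d → ℝ) :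
    (M ⬝ᵥ (A⁻¹ *ᵥ M) - M ⬝ᵥ ((A + vecMulVec φ φ)⁻¹ *ᵥ M) ≤
      (φ ⬝ᵥ ((A + vecMulVec φ φ)⁻¹ *ᵥ φ)) * (M ⬝ᵥ (A⁻¹ *ᵥ M))) ∧
      ∀ (Φ : ℕ → Fin d → ℝ) (Mseq : ℕ → Fin d → ℝ) (S : Matrix (Fin d) (Fin d) ℝ),
        S.PosDef → ∀ n : ℕ, 1 ≤ n →
        Mseq n ⬝ᵥ ((SmatD S Φ (n - 1))⁻¹ *ᵥ Mseq n) -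
            Mseq n ⬝ᵥ ((SmatD S Φ n)⁻¹ *ᵥ Mseq n) ≤
          (Φ n ⬝ᵥ ((SmatD S Φ n)⁻¹ *ᵥ Φ n)) *
            (Mseq n ⬝ᵥ ((SmatD S Φ (n - 1))⁻¹ *ᵥ Mseq n)) := by
  constructor
  · exact key_step A hA φ M
  · intro Φ Mseq S hS n hn
    have hstep : SmatD S Φ n = SmatD S Φ (n - 1) + vecMulVec (Φ n) (Φ n) := by
      obtain ⟨m, rfl⟩ := Nat.exists_eq_add_of_le hn
      simp only [SmatD, Nat.add_sub_cancel_left]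
      rw [show 1 + m + 1 = (m + 1) + 1 by ring, Finset.sum_range_succ,
        show m + 1 = 1 + m by ring, add_assoc]
    rw [hstep]
    exact key_step _ (SmatD_posDef S hS Φ (n - 1)) (Φ n) (Mseq n)
end
end
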